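/- In the ring ℚ[[x]] of formal power series over ℚ, the series g = 2·(1 + e^x)^{−1} is the unique formal power series such that for every integer k ≥ 1, the coefficient of x^{k−1} in ((1 + e^{−x})/2) · g · (x/(1 − e^{−x}))^k equals 1 if k = 1 and equals 0 if k ≥ 2. -/

import Mathlib

open PowerSeries

lemma deriv_resc_exp : d⁄dX ℚ (rescale (-1) (exp ℚ)) = -(rescale (-1) (exp ℚ)) := by
  ext n
  rw [coeff_derivative, map_neg, coeff_rescale, coeff_rescale, coeff_exp, coeff_exp]
  have h : (((n+1).factorial) : ℚ) = (n+1) * n.factorial := by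
    exact_mod_cast Nat.factorial_succ n
  simp only [eq_ratCast, Rat.cast_div, Rat.cast_one, Rat.cast_natCast]
  rw [h]
  have h1 : ((n.factorial) : ℚ) ≠ 0 := Nat.cast_ne_zero.mpr n.factorial_ne_zero
  have h2 : ((n:ℚ)+1) ≠ 0 := by positivity
  field_simp
  ring

lemma resc_exp_mul_exp : rescale (-1) (exp ℚ) * exp ℚ = 1 := by
  have := exp_mul_exp_eq_exp_add (-1 : ℚ) 1
  rw [rescale_one] at this
  simp only [RingHom.id_apply] at this
  rw [this]
  norm_num [rescale_zero]

theorem stmt_8 (u : PowerSeries ℚ)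
    (hu : PowerSeries.X * u = 1 - PowerSeries.rescale (-1) (PowerSeries.exp ℚ))
    (g : PowerSeries ℚ) :
    g = 2 * (1 + PowerSeries.exp ℚ)⁻¹ ↔
      ∀ k : ℕ, 1 ≤ k →
        PowerSeries.coeff (R := ℚ) (k - 1)
          (PowerSeries.C (R := ℚ) (1/2) * (1 + PowerSeries.rescale (-1) (PowerSeries.exp ℚ))
            * g * (u⁻¹) ^ k)
          = if k = 1 then 1 else 0 := by
  set Eb : PowerSeries ℚ := rescale (-1) (exp ℚ) with hEbdef
  have hEb0 : constantCoeff (R := ℚ) Eb = 1 := by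
    rw [hEbdef, ← coeff_zero_eq_constantCoeff]
    simp [coeff_rescale, coeff_exp]
  have hdEb : d⁄dX ℚ Eb = -Eb := by rw [hEbdef]; exact deriv_resc_exp
  have hu0 : constantCoeff (R := ℚ) u = 1 := by
    have h1 := congrArg (coeff (R := ℚ) 1) hu
    rw [show (1:ℕ) = 0 + 1 from rfl, coeff_succ_X_mul, map_sub, coeff_one] at h1
    rw [coeff_zero_eq_constantCoeff] at h1
    simpa [hEbdef, coeff_rescale, coeff_exp] using h1
  have hu0' : constantCoeff (R := ℚ) u ≠ 0 := by rw [hu0]; norm_num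
  have huinv0 : constantCoeff (R := ℚ) (u⁻¹) = 1 := by
    rw [PowerSeries.constantCoeff_inv, hu0]; norm_num
  have huu : u * u⁻¹ = 1 := PowerSeries.mul_inv_cancel u hu0'
  -- derivative relation: u + X * u' = Eb
  have hder : u + X * d⁄dX ℚ u = Eb := by
    have h := congrArg (d⁄dX ℚ) hu
    rw [Derivation.leibniz, map_sub, Derivation.map_one_eq_zero, smul_eq_mul,
      smul_eq_mul, derivative_X, mul_one, hdEb, zero_sub, neg_neg] at h
    linear_combination h
  -- key coefficient computation
  have key : ∀ m : ℕ, 1 ≤ m → coeff (R := ℚ) m (Eb * (u⁻¹) ^ (m + 1)) = 0 := by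
    intro m hm
    have hpow : d⁄dX ℚ ((u⁻¹) ^ m) =
        -((m : PowerSeries ℚ) * ((u⁻¹) ^ (m + 1) * d⁄dX ℚ u)) := by
      rw [Derivation.leibniz_pow, derivative_inv', nsmul_eq_mul, smul_eq_mul]
      have hp : (u⁻¹) ^ (m - 1) * (u⁻¹) ^ 2 = (u⁻¹) ^ (m + 1) := by
        rw [← pow_add]; congr 1; omega
      calc (m : PowerSeries ℚ) * ((u⁻¹) ^ (m-1) * (-(u⁻¹) ^ 2 * d⁄dX ℚ u))
          = -((m : PowerSeries ℚ) * ((u⁻¹) ^ (m-1) * (u⁻¹) ^ 2 * d⁄dX ℚ u)) := by ring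
        _ = _ := by rw [hp]
    have hcanc : u * (u⁻¹) ^ (m + 1) = (u⁻¹) ^ m := by
      rw [pow_succ, ← mul_assoc, mul_comm u ((u⁻¹) ^ m), mul_assoc, huu, mul_one]
    have hid : (C (R := ℚ) ((m:ℚ))) * (Eb * (u⁻¹) ^ (m + 1)) =
        (C (R := ℚ) ((m:ℚ))) * ((u⁻¹) ^ m) - X * d⁄dX ℚ ((u⁻¹) ^ m) := by
      have hCm : ((m : PowerSeries ℚ)) = C (R := ℚ) ((m:ℚ)) := by
        rw [← map_natCast (C (R := ℚ)) m]
      rw [hpow, ← hder, ← hCm]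
      linear_combination (m : PowerSeries ℚ) * hcanc
    have hc := congrArg (coeff (R := ℚ) m) hid
    obtain ⟨m', rfl⟩ : ∃ m', m = m' + 1 := ⟨m - 1, by omega⟩
    rw [map_sub, coeff_C_mul, coeff_C_mul, coeff_succ_X_mul, coeff_derivative] at hc
    push_cast at hc
    have hne : ((m' : ℚ) + 1) ≠ 0 := by positivity
    have h2 : ((m' : ℚ) + 1) * coeff (R := ℚ) (m' + 1) (Eb * u⁻¹ ^ (m' + 1 + 1)) = 0 := by
      linear_combination hc
    exact (mul_eq_zero.mp h2).resolve_left hne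
  -- condition for Eb * (u⁻¹)^k
  have cond0 : ∀ k : ℕ, 1 ≤ k →
      coeff (R := ℚ) (k - 1) (Eb * (u⁻¹) ^ k) = if k = 1 then 1 else 0 := by
    intro k hk
    obtain ⟨m, rfl⟩ : ∃ m, k = m + 1 := ⟨k - 1, by omega⟩
    rcases Nat.eq_zero_or_pos m with hm | hm
    · subst hm
      simp [coeff_zero_eq_constantCoeff, hEb0, huinv0]
    · rw [Nat.add_sub_cancel, key m hm, if_neg (by omega)]
  -- the product identity for g₀
  have h3 : (C (R := ℚ) (1/2) : PowerSeries ℚ) * 2 = 1 := by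
    rw [show (2 : PowerSeries ℚ) = C (R := ℚ) 2 from (map_ofNat (C (R := ℚ)) 2).symm, ← map_mul]
    norm_num
  have hE1 : (1 + exp ℚ) * (1 + exp ℚ)⁻¹ = 1 := by
    apply PowerSeries.mul_inv_cancel
    rw [map_add, map_one, constantCoeff_exp]; norm_num
  have h1Eb : 1 + Eb = Eb * (1 + exp ℚ) := by
    rw [mul_add, mul_one, hEbdef, resc_exp_mul_exp, add_comm]
  have hprod : C (R := ℚ) (1/2) * (1 + Eb) * (2 * (1 + exp ℚ)⁻¹) = Eb := by
    rw [h1Eb]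
    calc C (R := ℚ) (1/2) * (Eb * (1 + exp ℚ)) * (2 * (1 + exp ℚ)⁻¹)
        = (C (R := ℚ) (1/2) * 2) * Eb * ((1 + exp ℚ) * (1 + exp ℚ)⁻¹) := by ring
      _ = Eb := by rw [h3, hE1, one_mul, mul_one]
  -- forward direction holds for g₀
  have fwd : ∀ k : ℕ, 1 ≤ k →
      coeff (R := ℚ) (k - 1) (C (R := ℚ) (1/2) * (1 + Eb) * (2 * (1 + exp ℚ)⁻¹) * (u⁻¹) ^ k)
        = if k = 1 then 1 else 0 := by
    intro k hk
    rw [hprod]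
    exact cond0 k hk
  constructor
  · intro hg k hk
    rw [hg]
    exact fwd k hk
  · intro hcond
    set g0 : PowerSeries ℚ := 2 * (1 + exp ℚ)⁻¹ with hg0
    set F : PowerSeries ℚ := C (R := ℚ) (1/2) * (1 + Eb) * (g - g0) with hF
    have hdiff : ∀ k : ℕ, 1 ≤ k → coeff (R := ℚ) (k - 1) (F * (u⁻¹) ^ k) = 0 := by
      intro k hk
      have e1 := hcond k hk
      have e2 := fwd k hk
      have hsplit : F * (u⁻¹) ^ k = C (R := ℚ) (1/2) * (1 + Eb) * g * (u⁻¹) ^ k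
          - C (R := ℚ) (1/2) * (1 + Eb) * g0 * (u⁻¹) ^ k := by rw [hF]; ring
      rw [hsplit, map_sub, e1, e2, sub_self]
    have hzero : ∀ n : ℕ, coeff (R := ℚ) n F = 0 := by
      intro n
      induction n using Nat.strong_induction_on with
      | _ n ih =>
        have hd := hdiff (n + 1) (by omega)
        rw [Nat.add_sub_cancel, coeff_mul] at hd
        rw [Finset.sum_eq_single (n, 0)] at hd
        · rw [coeff_zero_eq_constantCoeff, map_pow, huinv0, one_pow, mul_one] at hd
          exact hd
        · intro p hp hne
          rcases p with ⟨a, b⟩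
          rw [Finset.HasAntidiagonal.mem_antidiagonal] at hp
          have hlt : a < n := by
            by_contra h'
            push_neg at h'
            apply hne
            have h1 : a = n := by omega
            have h2 : b = 0 := by omega
            subst h1; subst h2; rfl
          rw [ih a hlt, zero_mul]
        · intro hmem
          exact absurd (Finset.HasAntidiagonal.mem_antidiagonal.mpr (by simp)) hmem
    have hF0 : F = 0 := by
      ext n
      rw [hzero n, map_zero]
    have hAne : (C (R := ℚ) (1/2) * (1 + Eb) : PowerSeries ℚ) ≠ 0 := by
      intro hA
      have := congrArg (constantCoeff (R := ℚ)) hA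
      rw [map_mul, map_add, map_one, hEb0, constantCoeff_C, map_zero] at this
      norm_num at this
    rcases mul_eq_zero.mp (hF.symm.trans hF0) with hA | hgg
    · exact absurd hA hAne
    · rw [sub_eq_zero] at hgg
      exact hgg
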